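/- arXiv:2509.14578 — 3 statements merged into one kernel-verified Lean document; each statement's English description precedes it below -/
import Mathlib

section
/- Let x : ℝ² → ℝ and z : ℝ² → ℂ be differentiable at a point p, with Δ(p) := x(p)(1−x(p)) − |z(p)|² > 0, and set C := 2√Δ (so C is differentiable at p). Let r := (2·Re z, −2·Im z, 2x−1) : ℝ² → ℝ³ be the Bloch map, so 1 − ‖r(p)‖² = C(p)² > 0. Then for any real coefficients A and B and all indices μ, ν ∈ {1,2}, the tensor F_{μν} := A·(∂_μ r(p) · ∂_ν r(p)) + B·(r(p) · ∂_μ r(p))·(r(p) · ∂_ν r(p)) / (1 − ‖r(p)‖²) satisfies the three-channel decomposition F_{μν} = 4A·(∂_μ x(p)·∂_ν x(p) + Re(∂_μ z(p)·conj(∂_ν z(p)))) + B·∂_μ C(p)·∂_ν C(p). -/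
/-- Partial derivative of a real-valued map on `ℝ²` in the `μ`-th coordinate direction. -/
noncomputable def pderivR (f : (Fin 2 → ℝ) → ℝ) (p : Fin 2 → ℝ) (μ : Fin 2) : ℝ :=
  fderiv ℝ f p (Pi.single μ 1)

/-- Partial derivative of a complex-valued map on `ℝ²` in the `μ`-th coordinate direction. -/
noncomputable def pderivC (f : (Fin 2 → ℝ) → ℂ) (p : Fin 2 → ℝ) (μ : Fin 2) : ℂ :=
  fderiv ℝ f p (Pi.single μ 1)

/-- The concurrence `C = 2√(x(1−x) − |z|²)` of the reduced state family. -/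
noncomputable def concur (x : (Fin 2 → ℝ) → ℝ) (z : (Fin 2 → ℝ) → ℂ) : (Fin 2 → ℝ) → ℝ :=
  fun q => 2 * Real.sqrt (x q * (1 - x q) - ‖z q‖ ^ 2)

/-- The three components of the Bloch map `r = (2 Re z, −2 Im z, 2x − 1)`. -/
noncomputable def bloch1 (z : (Fin 2 → ℝ) → ℂ) : (Fin 2 → ℝ) → ℝ := fun q => 2 * (z q).re
noncomputable def bloch2 (z : (Fin 2 → ℝ) → ℂ) : (Fin 2 → ℝ) → ℝ := fun q => -2 * (z q).im
noncomputable def bloch3 (x : (Fin 2 → ℝ) → ℝ) : (Fin 2 → ℝ) → ℝ := fun q => 2 * x q - 1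

/-- Universal three-channel identity for Petz monotone metrics:
the tensor `F_{μν} = A (∂_μ r · ∂_ν r) + B (r·∂_μ r)(r·∂_ν r)/(1 − ‖r‖²)` equals
`4A (∂_μ x ∂_ν x + Re(∂_μ z conj ∂_ν z)) + B ∂_μ C ∂_ν C`.  Here `C` is
differentiable at `p` and `1 − ‖r(p)‖² = C(p)² > 0`. -/
theorem three_channel_identity (x : (Fin 2 → ℝ) → ℝ) (z : (Fin 2 → ℝ) → ℂ) (p : Fin 2 → ℝ)
    (hx : DifferentiableAt ℝ x p) (hz : DifferentiableAt ℝ z p)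
    (hΔ : x p * (1 - x p) - ‖z p‖ ^ 2 > 0) :
    DifferentiableAt ℝ (concur x z) p ∧
    1 - (bloch1 z p ^ 2 + bloch2 z p ^ 2 + bloch3 x p ^ 2) = concur x z p ^ 2 ∧
    0 < concur x z p ^ 2 ∧
    ∀ (A B : ℝ) (μ ν : Fin 2),
      A * (pderivR (bloch1 z) p μ * pderivR (bloch1 z) p ν
            + pderivR (bloch2 z) p μ * pderivR (bloch2 z) p ν
            + pderivR (bloch3 x) p μ * pderivR (bloch3 x) p ν)
        + B * ((bloch1 z p * pderivR (bloch1 z) p μ + bloch2 z p * pderivR (bloch2 z) p μ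
                  + bloch3 x p * pderivR (bloch3 x) p μ)
              * (bloch1 z p * pderivR (bloch1 z) p ν + bloch2 z p * pderivR (bloch2 z) p ν
                  + bloch3 x p * pderivR (bloch3 x) p ν))
          / (1 - (bloch1 z p ^ 2 + bloch2 z p ^ 2 + bloch3 x p ^ 2))
      = 4 * A * (pderivR x p μ * pderivR x p ν
            + (pderivC z p μ * (starRingEnd ℂ) (pderivC z p ν)).re)
        + B * pderivR (concur x z) p μ * pderivR (concur x z) p ν := by

  set X := fderiv ℝ x p with hXdef
  set Z := fderiv ℝ z p with hZdef
  have habs : ∀ q : Fin 2 → ℝ, x q * (1 - x q) - ‖z q‖ ^ 2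
      = x q * (1 - x q) - ((z q).re * (z q).re + (z q).im * (z q).im) := fun q => by
    rw [Complex.sq_norm, Complex.normSq_apply]
  have hΔpos : 0 < x p * (1 - x p) - ((z p).re * (z p).re + (z p).im * (z p).im) := by
    rw [← habs p]; exact hΔ
  set Δp : ℝ := x p * (1 - x p) - ((z p).re * (z p).re + (z p).im * (z p).im) with hΔpdef
  have hs : Real.sqrt Δp ^ 2 = Δp := Real.sq_sqrt hΔpos.le
  have hspos : 0 < Real.sqrt Δp := Real.sqrt_pos.mpr hΔpos
  have hΔne : Δp ≠ 0 := ne_of_gt hΔpos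
  have hre : HasFDerivAt (fun q => (z q).re) (Complex.reCLM.comp Z) p :=
    (Complex.reCLM.hasFDerivAt).comp p hz.hasFDerivAt
  have him : HasFDerivAt (fun q => (z q).im) (Complex.imCLM.comp Z) p :=
    (Complex.imCLM.hasFDerivAt).comp p hz.hasFDerivAt
  have hΔfun := ((hx.hasFDerivAt.mul ((hasFDerivAt_const (1:ℝ) p).sub hx.hasFDerivAt)).sub
      ((hre.mul hre).add (him.mul him)))
  have hconv : concur x z = fun q =>
      2 * Real.sqrt (x q * (1 - x q) - ((z q).re * (z q).re + (z q).im * (z q).im)) := by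
    funext q; unfold concur; rw [habs q]
  have hCder := (hΔfun.sqrt hΔne).const_mul 2
  change HasFDerivAt (fun q => 2 * Real.sqrt (x q * (1 - x q) - ((z q).re * (z q).re + (z q).im * (z q).im))) _ p at hCder
  rw [← hconv] at hCder
  have hdiffC : DifferentiableAt ℝ (concur x z) p := hCder.differentiableAt
  have hnorm : 1 - (bloch1 z p ^ 2 + bloch2 z p ^ 2 + bloch3 x p ^ 2) = 4 * Δp := by
    simp only [bloch1, bloch2, bloch3, hΔpdef]; ring
  have hCval : concur x z p ^ 2 = 4 * Δp := by
    unfold concur; rw [habs p, mul_pow, ← hΔpdef, hs]; ring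
  refine ⟨hdiffC, by rw [hnorm, hCval], by rw [hCval]; linarith, ?_⟩
  intro A B μ ν
  have h1 : ∀ κ : Fin 2, pderivR (bloch1 z) p κ = 2 * (Z (Pi.single κ 1)).re := by
    intro κ
    have : HasFDerivAt (bloch1 z) ((2:ℝ) • (Complex.reCLM.comp Z)) p := hre.const_mul 2
    rw [pderivR, this.fderiv]; simp
  have h2 : ∀ κ : Fin 2, pderivR (bloch2 z) p κ = -2 * (Z (Pi.single κ 1)).im := by
    intro κ
    have : HasFDerivAt (bloch2 z) ((-2:ℝ) • (Complex.imCLM.comp Z)) p := him.const_mul (-2)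
    rw [pderivR, this.fderiv]; simp
  have h3 : ∀ κ : Fin 2, pderivR (bloch3 x) p κ = 2 * X (Pi.single κ 1) := by
    intro κ
    have : HasFDerivAt (bloch3 x) ((2:ℝ) • X) p := (hx.hasFDerivAt.const_mul 2).sub_const 1
    rw [pderivR, this.fderiv]; simp
  have hxv : ∀ κ : Fin 2, pderivR x p κ = X (Pi.single κ 1) := fun κ => rfl
  have hzv : ∀ κ : Fin 2, pderivC z p κ = Z (Pi.single κ 1) := fun κ => rfl
  have hCv : ∀ κ : Fin 2, pderivR (concur x z) p κ =
      (X (Pi.single κ 1) * (1 - 2 * x p) - 2 * (z p).re * (Z (Pi.single κ 1)).re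
        - 2 * (z p).im * (Z (Pi.single κ 1)).im) / Real.sqrt Δp := by
    intro κ
    rw [pderivR, hCder.fderiv]
    simp only [ContinuousLinearMap.smul_apply, ContinuousLinearMap.sub_apply,
      ContinuousLinearMap.add_apply, ContinuousLinearMap.comp_apply, smul_eq_mul,
      Complex.reCLM_apply, Complex.imCLM_apply, ContinuousLinearMap.zero_apply,
      pow_one, Pi.mul_apply, Pi.sub_apply, Pi.add_apply]
    rw [← hΔpdef]
    field_simp
    ring
  have hb1 : bloch1 z p = 2 * (z p).re := rfl
  have hb2 : bloch2 z p = -2 * (z p).im := rfl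
  have hb3 : bloch3 x p = 2 * x p - 1 := rfl
  rw [h1 μ, h1 ν, h2 μ, h2 ν, h3 μ, h3 ν, hxv μ, hxv ν, hzv μ, hzv ν, hCv μ, hCv ν,
    hnorm, hb1, hb2, hb3]
  rw [Complex.mul_re, Complex.conj_re, Complex.conj_im]
  rw [← hs] at hΔne ⊢
  field_simp
  simp only [Real.sqrt_sq hspos.le]
  ring
end

section
/- Let x ∈ ℝ and z = u + iv ∈ ℂ with Δ := x(1−x) − |z|² > 0, and let ẋ ∈ ℝ, ż = p + iq ∈ ℂ be arbitrary. Set α := |z|² = u² + v², β := 2·Re(ż·conj z) = 2(pu + qv), and define x_L := (β(x−1) − ẋ(2α + x − 1))/Δ, y_L := ((2α − x)ẋ − βx)/Δ, S := x_L + y_L, a := 2p − u·S, b := 2q − v·S. Then the Hermitian matrix L := [[x_L, a + ib],[a − ib, y_L]] satisfies the Lyapunov (SLD) equation ρ̇ = (1/2)(ρL + Lρ), where ρ := [[x, z],[conj z, 1−x]] and ρ̇ := [[ẋ, ż],[conj ż, −ẋ]]. -/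
open Complex

lemma sld_aux1 (x u v p q xd D X Y : ℝ) (hD : D ≠ 0)
    (hDeq : D = x*(1-x) - (u^2+v^2))
    (hX : X = (2*(p*u+q*v) * (x - 1) - xd * (2 * (u^2+v^2) + x - 1)) / D)
    (hY : Y = ((2 * (u^2+v^2) - x) * xd - 2*(p*u+q*v) * x) / D) :
    xd = x * X + (2*p - u*(X+Y)) * u + (2*q - v*(X+Y)) * v := by
  subst hX hY hDeq
  field_simp
  ring

lemma sld_aux2 (x u v p q xd D X Y : ℝ) (hD : D ≠ 0)
    (hDeq : D = x*(1-x) - (u^2+v^2))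
    (hX : X = (2*(p*u+q*v) * (x - 1) - xd * (2 * (u^2+v^2) + x - 1)) / D)
    (hY : Y = ((2 * (u^2+v^2) - x) * xd - 2*(p*u+q*v) * x) / D) :
    -xd = (1-x) * Y + (2*p - u*(X+Y)) * u + (2*q - v*(X+Y)) * v := by
  subst hX hY hDeq
  field_simp
  ring

/-- Closed-form SLD for a full-rank `2×2` density matrix: with
`Δ = x(1−x) − |z|² > 0` and tangent data `(xd, zd) = (ẋ, ż)`, the explicitly
constructed Hermitian matrix `L` solves the Lyapunov equation
`ρ̇ = (1/2)(ρL + Lρ)`. -/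
theorem sld_closed_form (x : ℝ) (z : ℂ) (xd : ℝ) (zd : ℂ)
    (hΔ : x * (1 - x) - ‖z‖ ^ 2 > 0) :
    let Δ : ℝ := x * (1 - x) - ‖z‖ ^ 2
    let u : ℝ := z.re
    let v : ℝ := z.im
    let p : ℝ := zd.re
    let q : ℝ := zd.im
    let α : ℝ := u ^ 2 + v ^ 2
    let β : ℝ := 2 * (p * u + q * v)
    let xL : ℝ := (β * (x - 1) - xd * (2 * α + x - 1)) / Δ
    let yL : ℝ := ((2 * α - x) * xd - β * x) / Δ
    let S : ℝ := xL + yL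
    let a : ℝ := 2 * p - u * S
    let b : ℝ := 2 * q - v * S
    let ρ : Matrix (Fin 2) (Fin 2) ℂ := !![(x : ℂ), z; (starRingEnd ℂ) z, 1 - (x : ℂ)]
    let ρdot : Matrix (Fin 2) (Fin 2) ℂ := !![(xd : ℂ), zd; (starRingEnd ℂ) zd, -(xd : ℂ)]
    let L : Matrix (Fin 2) (Fin 2) ℂ :=
      !![(xL : ℂ), (a : ℂ) + (b : ℂ) * Complex.I;
         (a : ℂ) - (b : ℂ) * Complex.I, (yL : ℂ)]
    ρdot = (1 / 2 : ℂ) • (ρ * L + L * ρ) := by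
  intro Δ u v p q α β xL yL S a b ρ ρdot L
  have habs : (‖z‖)^2 = u^2 + v^2 := by
    rw [Complex.sq_norm, Complex.normSq_apply]; ring
  have hΔeq : Δ = x*(1-x) - (u^2+v^2) := by
    show x * (1 - x) - ‖z‖ ^ 2 = _; rw [habs]
  have hΔ' : Δ ≠ 0 := ne_of_gt hΔ
  have hX : xL = (2*(p*u+q*v) * (x - 1) - xd * (2 * (u^2+v^2) + x - 1)) / Δ := by
    show (β * (x - 1) - xd * (2 * α + x - 1)) / Δ = _; norm_num [β, α]
  have hY : yL = ((2 * (u^2+v^2) - x) * xd - 2*(p*u+q*v) * x) / Δ := by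
    show ((2 * α - x) * xd - β * x) / Δ = _; norm_num [β, α]
  have key1 := sld_aux1 x u v p q xd Δ xL yL hΔ' hΔeq hX hY
  have key2 := sld_aux2 x u v p q xd Δ xL yL hΔ' hΔeq hX hY
  have ka : a = 2*p - u*(xL+yL) := rfl
  have kb : b = 2*q - v*(xL+yL) := rfl
  have hz : z = (u : ℂ) + v * Complex.I := (Complex.re_add_im z).symm
  have hzd : zd = (p : ℂ) + q * Complex.I := (Complex.re_add_im zd).symm
  clear_value xL yL
  ext i j
  fin_cases i <;> fin_cases j <;>
    · show _ = (1/2 : ℂ) * _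
      simp only [ρ, ρdot, L, Matrix.add_apply, Matrix.mul_apply, Fin.sum_univ_two,
        Matrix.cons_val', Matrix.cons_val_zero, Matrix.cons_val_one, Matrix.head_cons,
        Matrix.empty_val', Matrix.cons_val_fin_one, Matrix.head_fin_const]
      rw [hz, hzd, Complex.ext_iff]
      constructor <;>
        · simp [Complex.add_re, Complex.add_im, Complex.mul_re, Complex.mul_im, Complex.sub_re,
            Complex.sub_im]
          first
            | linear_combination key1
            | linear_combination key2
            | linear_combination ka
end

section
/- Let m be a positive natural number and let x, w₁, w₂ : ℝ^m → ℝ be differentiable at a point θ with Δ(θ) := x(θ)(1−x(θ)) − w₁(θ)² − w₂(θ)² > 0, and set 𝒞 := 2√(x(1−x) − w₁² − w₂²) (differentiable at θ). Then the m×m real matrix F with entries F_{ij} := 4·∂_i x(θ)·∂_j x(θ) + 4·∂_i w₁(θ)·∂_j w₁(θ) + 4·∂_i w₂(θ)·∂_j w₂(θ) + ∂_i 𝒞(θ)·∂_j 𝒞(θ) has rank at most 3. -/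
/-- Partial derivative of a real-valued map on `ℝ^m` in the `i`-th coordinate direction. -/
noncomputable def pderivM (m : ℕ) (f : (Fin m → ℝ) → ℝ) (θ : Fin m → ℝ) (i : Fin m) : ℝ :=
  fderiv ℝ f θ (Pi.single i 1)

/-- The gradient of the concurrence is a linear combination of the gradients of the
three coordinates `(x, w₁, w₂)` on the region `Δ > 0`. -/
theorem pderiv_conc_comb (m : ℕ)
    (x w₁ w₂ : (Fin m → ℝ) → ℝ) (θ : Fin m → ℝ)
    (hx : DifferentiableAt ℝ x θ) (hw₁ : DifferentiableAt ℝ w₁ θ)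
    (hw₂ : DifferentiableAt ℝ w₂ θ)
    (hΔ : x θ * (1 - x θ) - w₁ θ ^ 2 - w₂ θ ^ 2 > 0) :
    ∃ a b c : ℝ, ∀ i,
      pderivM m (fun η => 2 * Real.sqrt (x η * (1 - x η) - w₁ η ^ 2 - w₂ η ^ 2)) θ i
        = a * pderivM m x θ i + b * pderivM m w₁ θ i + c * pderivM m w₂ θ i := by
  set g : (Fin m → ℝ) → ℝ := fun η => x η * (1 - x η) - w₁ η ^ 2 - w₂ η ^ 2 with hgdef
  set Dx := fderiv ℝ x θ
  set D1 := fderiv ℝ w₁ θ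
  set D2 := fderiv ℝ w₂ θ
  have hgne : g θ ≠ 0 := ne_of_gt hΔ
  have hG : HasFDerivAt g ((1 - 2 * x θ) • Dx + (-2 * w₁ θ) • D1 + (-2 * w₂ θ) • D2) θ := by
    have hsq : (fun η => x η * (1 - x η) - w₁ η ^ 2 - w₂ η ^ 2)
        = fun η => x η * (1 - x η) - w₁ η * w₁ η - w₂ η * w₂ η := by
      funext η; ring
    have h1 : HasFDerivAt (fun η => x η * (1 - x η) - w₁ η ^ 2 - w₂ η ^ 2)
        ((x θ • ((0 : (Fin m → ℝ) →L[ℝ] ℝ) - Dx) + (1 - x θ) • Dx)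
          - (w₁ θ • D1 + w₁ θ • D1) - (w₂ θ • D2 + w₂ θ • D2)) θ := by
      rw [hsq]
      exact ((hx.hasFDerivAt.mul ((hasFDerivAt_const 1 θ).sub hx.hasFDerivAt)).sub
        (hw₁.hasFDerivAt.mul hw₁.hasFDerivAt)).sub (hw₂.hasFDerivAt.mul hw₂.hasFDerivAt)
    convert h1 using 1
    ext e
    simp
    ring
  have hs : HasFDerivAt (fun η => Real.sqrt (g η))
      ((1 / (2 * Real.sqrt (g θ))) • ((1 - 2 * x θ) • Dx + (-2 * w₁ θ) • D1 + (-2 * w₂ θ) • D2)) θ :=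
    (Real.hasDerivAt_sqrt hgne).comp_hasFDerivAt θ hG
  have hC : HasFDerivAt (fun η => 2 * Real.sqrt (g η))
      ((2 : ℝ) • ((1 / (2 * Real.sqrt (g θ))) • ((1 - 2 * x θ) • Dx + (-2 * w₁ θ) • D1 + (-2 * w₂ θ) • D2))) θ :=
    hs.const_mul 2
  refine ⟨(1 - 2 * x θ) / Real.sqrt (g θ), (-2 * w₁ θ) / Real.sqrt (g θ),
    (-2 * w₂ θ) / Real.sqrt (g θ), fun i => ?_⟩
  have hsne : Real.sqrt (g θ) ≠ 0 := Real.sqrt_ne_zero'.mpr hΔ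
  have hC' : fderiv ℝ (fun η => 2 * Real.sqrt (x η * (1 - x η) - w₁ η ^ 2 - w₂ η ^ 2)) θ
      = (2 : ℝ) • ((1 / (2 * Real.sqrt (g θ))) • ((1 - 2 * x θ) • Dx + (-2 * w₁ θ) • D1 + (-2 * w₂ θ) • D2)) :=
    hC.fderiv
  simp only [pderivM, hC']
  simp only [ContinuousLinearMap.smul_apply, ContinuousLinearMap.add_apply, smul_eq_mul]
  field_simp
  ring

/-- Intrinsic rank bound for the three-channel SLD quantum Fisher information matrix:
for any smooth `m`-parameter family of one-qubit reduced states with coordinates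
`(x, w₁, w₂)` and `Δ > 0` at `θ`, the matrix
`F_{ij} = 4 ∂_i x ∂_j x + 4 ∂_i w₁ ∂_j w₁ + 4 ∂_i w₂ ∂_j w₂ + ∂_i 𝒞 ∂_j 𝒞`
has rank at most `3`. -/
theorem qfim_rank_le_three (m : ℕ) (hm : 0 < m)
    (x w₁ w₂ : (Fin m → ℝ) → ℝ) (θ : Fin m → ℝ)
    (hx : DifferentiableAt ℝ x θ) (hw₁ : DifferentiableAt ℝ w₁ θ)
    (hw₂ : DifferentiableAt ℝ w₂ θ)
    (hΔ : x θ * (1 - x θ) - w₁ θ ^ 2 - w₂ θ ^ 2 > 0) :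
    let 𝒞 : (Fin m → ℝ) → ℝ :=
      fun η => 2 * Real.sqrt (x η * (1 - x η) - w₁ η ^ 2 - w₂ η ^ 2)
    let F : Matrix (Fin m) (Fin m) ℝ := Matrix.of fun i j =>
      4 * pderivM m x θ i * pderivM m x θ j
        + 4 * pderivM m w₁ θ i * pderivM m w₁ θ j
        + 4 * pderivM m w₂ θ i * pderivM m w₂ θ j
        + pderivM m 𝒞 θ i * pderivM m 𝒞 θ j
    F.rank ≤ 3 := by
  intro 𝒞 F
  obtain ⟨a, b, c, hc⟩ := pderiv_conc_comb m x w₁ w₂ θ hx hw₁ hw₂ hΔ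
  let u : Fin m → ℝ := pderivM m x θ
  let v : Fin m → ℝ := pderivM m w₁ θ
  let w : Fin m → ℝ := pderivM m w₂ θ
  let C : Fin m → ℝ := pderivM m 𝒞 θ
  set L : Matrix (Fin m) (Fin 3) ℝ := Matrix.of fun i k => ![u i, v i, w i] k
  set R : Matrix (Fin 3) (Fin m) ℝ :=
    Matrix.of fun k j => ![4 * u j + a * C j, 4 * v j + b * C j, 4 * w j + c * C j] k
  have hF : F = L * R := by
    ext i j
    simp only [F, L, R, u, v, w, C, Matrix.mul_apply, Matrix.of_apply, Fin.sum_univ_three]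
    simp only [Matrix.cons_val_zero, Matrix.cons_val_one, Matrix.head_cons,
      Matrix.cons_val_two, Matrix.tail_cons]
    rw [hc i]
    ring
  calc F.rank = (L * R).rank := by rw [hF]
    _ ≤ L.rank := Matrix.rank_mul_le_left L R
    _ ≤ Fintype.card (Fin 3) := Matrix.rank_le_card_width L
    _ = 3 := by simp
end
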